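/- Let G be a Hausdorff paratopological group of almost countable type. Then there exists a compact subgroup H of G that is of countable character in G such that the quotient mapping π of G onto the left coset space G/H is perfect. -/

import Mathlib

open Set Topology Pointwise

/-- A compact subset `K` of `X` is of countable character in `X` if there is a
countable family of open sets, each containing `K`, such that every open set
containing `K` contains one of them. -/
def CountableChar {X : Type*} [TopologicalSpace X] (K : Set X) : Prop :=
  ∃ U : ℕ → Set X, (∀ n, IsOpen (U n) ∧ K ⊆ U n) ∧
    ∀ V : Set X, IsOpen V → K ⊆ V → ∃ n, U n ⊆ V

/-- A space is of almost countable type if it contains a non-empty compact set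
of countable character in the space. -/
def AlmostCountableType (X : Type*) [TopologicalSpace X] : Prop :=
  ∃ K : Set X, K.Nonempty ∧ IsCompact K ∧ CountableChar K

/-- A space is of almost subcountable type if it contains a non-empty compact
set that is a Gδ-set in the space. -/
def AlmostSubcountableType (X : Type*) [TopologicalSpace X] : Prop :=
  ∃ K : Set X, K.Nonempty ∧ IsCompact K ∧ IsGδ K

/-- A space is of countable type if every compact subset is contained in a
compact subset of countable character in the space. -/
def CountableType (X : Type*) [TopologicalSpace X] : Prop :=
  ∀ F : Set X, IsCompact F → ∃ K : Set X, F ⊆ K ∧ IsCompact K ∧ CountableChar K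

/-- A map is perfect if it is continuous, closed, and has compact fibers. -/
def PerfectMap {X Y : Type*} [TopologicalSpace X] [TopologicalSpace Y] (f : X → Y) : Prop :=
  Continuous f ∧ IsClosedMap f ∧ ∀ y : Y, IsCompact (f ⁻¹' {y})

section Aux

variable {G : Type*} [Group G] [TopologicalSpace G] [ContinuousMul G]

/-- A compact submonoid of a Hausdorff group with continuous multiplication is closed
under inverses (Numakura-type argument via Ellis' idempotent theorem). -/
private lemma inv_mem_of_compact_submonoid [T2Space G] {S : Set G} (hS : IsCompact S)
    (h1 : (1 : G) ∈ S) (hmul : ∀ a ∈ S, ∀ b ∈ S, a * b ∈ S) {g : G} (hg : g ∈ S) :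
    g⁻¹ ∈ S := by
  classical
  set R : Set G := Set.range (fun n : ℕ => g ^ (n + 1)) with hRdef
  have hpow : ∀ n : ℕ, g ^ n ∈ S := by
    intro n
    induction n with
    | zero => simpa using h1
    | succ k ih => rw [pow_succ]; exact hmul _ ih _ hg
  have hRS : R ⊆ S := by rintro _ ⟨n, rfl⟩; exact hpow (n + 1)
  have hScl : IsClosed S := hS.isClosed
  have hRmul : ∀ a ∈ R, ∀ b ∈ R, a * b ∈ R := by
    rintro _ ⟨n, rfl⟩ _ ⟨m, rfl⟩
    exact ⟨n + m + 1, by rw [← pow_add]; ring_nf⟩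
  -- the closure of R is a compact subsemigroup
  have hTS : closure R ⊆ S := closure_minimal hRS hScl
  have hTc : IsCompact (closure R) := hS.of_isClosed_subset isClosed_closure hTS
  have hTmul : ∀ a ∈ closure R, ∀ b ∈ closure R, a * b ∈ closure R := by
    let Rsg : Subsemigroup G := { carrier := R, mul_mem' := fun ha hb => hRmul _ ha _ hb }
    intro a ha b hb
    exact Rsg.topologicalClosure.mul_mem ha hb
  have hTne : (closure R).Nonempty := ⟨g, subset_closure ⟨0, by simp⟩⟩
  obtain ⟨m, hmT, hmm⟩ :=
    exists_idempotent_in_compact_subsemigroup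
      (fun r : G => continuous_id.mul continuous_const) (closure R) hTne hTc hTmul
  have hm1 : m = 1 := by
    have := mul_left_cancel (a := m) (b := m) (c := 1) (by simpa using hmm)
    exact this
  have h1T : (1 : G) ∈ closure R := hm1 ▸ hmT
  -- now g⁻¹ = 1 * g⁻¹ is in the closure of R * g⁻¹ ⊆ S
  have hcont : Continuous (fun x : G => x * g⁻¹) := continuous_id.mul continuous_const
  have himg : (fun x : G => x * g⁻¹) '' closure R ⊆ closure ((fun x : G => x * g⁻¹) '' R) :=
    image_closure_subset_closure_image hcont
  have hmem : g⁻¹ ∈ closure ((fun x : G => x * g⁻¹) '' R) := by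
    have : g⁻¹ ∈ (fun x : G => x * g⁻¹) '' closure R := ⟨1, h1T, by simp⟩
    exact himg this
  have hsub : (fun x : G => x * g⁻¹) '' R ⊆ S := by
    rintro _ ⟨_, ⟨n, rfl⟩, rfl⟩
    have : g ^ (n + 1) * g⁻¹ = g ^ n := by
      rw [pow_succ, mul_assoc, mul_inv_cancel, mul_one]
    show g ^ (n + 1) * g⁻¹ ∈ S
    rw [this]
    exact hpow n
  have := closure_minimal hsub hScl
  exact this hmem

/-- If `c * g ∈ U` for all `c` in a compact set `C` and `U` is open, then there is an open
neighbourhood `B` of `g` with `C * B ⊆ U`. -/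
private lemma exists_nhds_right {C U : Set G} (hC : IsCompact C) (hU : IsOpen U) {g : G}
    (h : ∀ c ∈ C, c * g ∈ U) :
    ∃ B : Set G, IsOpen B ∧ g ∈ B ∧ ∀ b ∈ B, ∀ c ∈ C, c * b ∈ U := by
  classical
  have key : ∀ c ∈ C, ∃ A B : Set G,
      IsOpen A ∧ c ∈ A ∧ IsOpen B ∧ g ∈ B ∧ ∀ a ∈ A, ∀ b ∈ B, a * b ∈ U := by
    intro c hc
    have hU' : U ∈ 𝓝 (c * g) := hU.mem_nhds (h c hc)
    have hcont : ContinuousAt (fun p : G × G => p.1 * p.2) (c, g) := continuous_mul.continuousAt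
    have hpre : (fun p : G × G => p.1 * p.2) ⁻¹' U ∈ 𝓝 (c, g) := hcont hU'
    rw [mem_nhds_prod_iff'] at hpre
    obtain ⟨A, B, hAo, hcA, hBo, hgB, hAB⟩ := hpre
    exact ⟨A, B, hAo, hcA, hBo, hgB, fun a ha b hb => hAB (Set.mk_mem_prod ha hb)⟩
  choose! A B hAo hcA hBo hgB hABU using key
  obtain ⟨t, htC, hcov⟩ := hC.elim_nhds_subcover A (fun c hc => (hAo c hc).mem_nhds (hcA c hc))
  refine ⟨⋂ c ∈ t, B c, isOpen_biInter_finset (fun c hc => hBo c (htC c hc)), ?_, ?_⟩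
  · exact Set.mem_biInter (fun c hc => hgB c (htC c hc))
  · intro b hb c hc
    obtain ⟨c', hc'⟩ := Set.mem_iUnion.mp (hcov hc)
    obtain ⟨hc't, hcA'⟩ := Set.mem_iUnion.mp hc'
    exact hABU c' (htC c' hc't) c hcA' b (Set.mem_iInter₂.mp hb c' hc't)

/-- If `g * c ∈ U` for all `c` in a compact set `C` and `U` is open, then there is an open
neighbourhood `B` of `g` with `B * C ⊆ U`. -/
private lemma exists_nhds_left {C U : Set G} (hC : IsCompact C) (hU : IsOpen U) {g : G}
    (h : ∀ c ∈ C, g * c ∈ U) :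
    ∃ B : Set G, IsOpen B ∧ g ∈ B ∧ ∀ b ∈ B, ∀ c ∈ C, b * c ∈ U := by
  classical
  have key : ∀ c ∈ C, ∃ A B : Set G,
      IsOpen A ∧ c ∈ A ∧ IsOpen B ∧ g ∈ B ∧ ∀ b ∈ B, ∀ a ∈ A, b * a ∈ U := by
    intro c hc
    have hU' : U ∈ 𝓝 (g * c) := hU.mem_nhds (h c hc)
    have hcont : ContinuousAt (fun p : G × G => p.1 * p.2) (g, c) := continuous_mul.continuousAt
    have hpre : (fun p : G × G => p.1 * p.2) ⁻¹' U ∈ 𝓝 (g, c) := hcont hU'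
    rw [mem_nhds_prod_iff'] at hpre
    obtain ⟨B, A, hBo, hgB, hAo, hcA, hAB⟩ := hpre
    exact ⟨A, B, hAo, hcA, hBo, hgB, fun b hb a ha => hAB (Set.mk_mem_prod hb ha)⟩
  choose! A B hAo hcA hBo hgB hABU using key
  obtain ⟨t, htC, hcov⟩ := hC.elim_nhds_subcover A (fun c hc => (hAo c hc).mem_nhds (hcA c hc))
  refine ⟨⋂ c ∈ t, B c, isOpen_biInter_finset (fun c hc => hBo c (htC c hc)), ?_, ?_⟩
  · exact Set.mem_biInter (fun c hc => hgB c (htC c hc))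
  · intro b hb c hc
    obtain ⟨c', hc'⟩ := Set.mem_iUnion.mp (hcov hc)
    obtain ⟨hc't, hcA'⟩ := Set.mem_iUnion.mp hc'
    exact hABU c' (htC c' hc't) b (Set.mem_iInter₂.mp hb c' hc't) c hcA'

private lemma mem_closure_of_cluster {a : G} {l : Filter G} {s : Set G}
    (h : ClusterPt a l) (hs : s ∈ l) : a ∈ closure s :=
  mem_closure_iff_clusterPt.mpr (h.mono (Filter.le_principal_iff.mpr hs))

end Aux

/-- A Hausdorff paratopological group of almost countable type admits a
compact subgroup `H` of countable character in `G` such that the quotient map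
`G → G ⧸ H` is perfect. -/
theorem exists_compact_subgroup_perfect_quotient {G : Type*} [Group G]
    [TopologicalSpace G] [ContinuousMul G] [T2Space G]
    (hG : AlmostCountableType G) :
    ∃ H : Subgroup G, IsCompact (H : Set G) ∧ CountableChar (H : Set G) ∧
      PerfectMap (QuotientGroup.mk : G → G ⧸ H) := by
  classical
  obtain ⟨K₀, ⟨k₀, hk₀⟩, hK₀c, W₀, hW₀, hW₀base⟩ := hG
  -- translate `K₀` so that it contains `1`
  set K : Set G := (fun x => k₀ * x) ⁻¹' K₀ with hKdef
  set U : ℕ → Set G := fun n => (fun x => k₀ * x) ⁻¹' (⋂ i ∈ Finset.range (n + 1), W₀ i)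
    with hUdef
  have hKimg : K = (fun x => k₀⁻¹ * x) '' K₀ := by
    ext x
    constructor
    · intro hx; exact ⟨k₀ * x, hx, by simp⟩
    · rintro ⟨y, hy, rfl⟩; simpa [hKdef, mul_inv_cancel_left] using hy
  have hKc : IsCompact K := by
    rw [hKimg]; exact hK₀c.image (continuous_const.mul continuous_id)
  have hKcl : IsClosed K := hKc.isClosed
  have h1K : (1 : G) ∈ K := by simpa [hKdef] using hk₀
  have hUo : ∀ n, IsOpen (U n) := fun n =>
    (isOpen_biInter_finset (fun i _ => (hW₀ i).1)).preimage (continuous_const.mul continuous_id)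
  have hKU : ∀ n, K ⊆ U n := by
    intro n x hx
    simp only [hUdef, Set.mem_preimage, Set.mem_iInter]
    intro i _
    exact (hW₀ i).2 hx
  have hUanti : ∀ m n, m ≤ n → U n ⊆ U m := by
    intro m n hmn x hx
    simp only [hUdef, Set.mem_preimage, Set.mem_iInter] at hx ⊢
    intro i hi
    exact hx i (Finset.mem_range.mpr (lt_of_lt_of_le (Finset.mem_range.mp hi) (by omega)))
  have hUbase : ∀ V : Set G, IsOpen V → K ⊆ V → ∃ n, U n ⊆ V := by
    intro V hVo hKV
    have hV₂o : IsOpen ((fun x => k₀⁻¹ * x) ⁻¹' V) :=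
      hVo.preimage (continuous_const.mul continuous_id)
    have hKV₂ : K₀ ⊆ (fun x => k₀⁻¹ * x) ⁻¹' V := by
      intro x hx
      have : k₀⁻¹ * x ∈ K := by simpa [hKdef, mul_inv_cancel_left] using hx
      exact hKV this
    obtain ⟨n, hn⟩ := hW₀base _ hV₂o hKV₂
    refine ⟨n, fun x hx => ?_⟩
    have hx' : k₀ * x ∈ W₀ n := by
      simp only [hUdef, Set.mem_preimage, Set.mem_iInter] at hx
      exact hx n (Finset.mem_range.mpr (by omega))
    have := hn hx'
    simpa [inv_mul_cancel_left] using this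
  -- the subgroup
  set Hs : Set G := {g : G | ∀ x ∈ K, x * g ∈ K} with hHsdef
  have h1H : (1 : G) ∈ Hs := fun x hx => by simpa using hx
  have hmulH : ∀ a ∈ Hs, ∀ b ∈ Hs, a * b ∈ Hs := by
    intro a ha b hb x hx
    rw [← mul_assoc]
    exact hb _ (ha x hx)
  have hHsub : Hs ⊆ K := fun g hg => by simpa using hg 1 h1K
  have hHcl : IsClosed Hs := by
    have : Hs = ⋂ x ∈ K, (fun g => x * g) ⁻¹' K := by
      ext g; simp [hHsdef, Set.mem_iInter]
    rw [this]
    exact isClosed_biInter fun x _ => hKcl.preimage (continuous_const.mul continuous_id)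
  have hHc : IsCompact Hs := hKc.of_isClosed_subset hHcl hHsub
  have hinvH : ∀ g ∈ Hs, g⁻¹ ∈ Hs := fun g hg =>
    inv_mem_of_compact_submonoid hHc h1H hmulH hg
  let H : Subgroup G :=
    { carrier := Hs
      one_mem' := h1H
      mul_mem' := fun ha hb => hmulH _ ha _ hb
      inv_mem' := fun ha => hinvH _ ha }
  have hHcoe : (H : Set G) = Hs := rfl
  refine ⟨H, by rw [hHcoe]; exact hHc, ?_, ?_⟩
  · -- countable character
    set O : ℕ → Set G := fun n => {g : G | ∀ x ∈ K, x * g ∈ U n} with hOdef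
    have hOopen : ∀ n, IsOpen (O n) := by
      intro n
      rw [isOpen_iff_forall_mem_open]
      intro g hg
      obtain ⟨B, hBo, hgB, hB⟩ := exists_nhds_right hKc (hUo n) hg
      exact ⟨B, fun b hb x hx => hB b hb x hx, hBo, hgB⟩
    have hHO : ∀ n, (H : Set G) ⊆ O n := by
      intro n g hg x hx
      exact hKU n (hg x hx)
    refine ⟨O, fun n => ⟨hOopen n, hHO n⟩, ?_⟩
    intro W hWo hHW
    by_contra hcon
    push_neg at hcon
    have hcon' : ∀ n, ∃ g, g ∈ O n ∧ g ∉ W := by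
      intro n
      obtain ⟨g, hg, hgW⟩ := Set.not_subset.mp (hcon n)
      exact ⟨g, hg, hgW⟩
    choose gseq hgO hgW using hcon'
    -- every open set around K eventually absorbs x * gseq n
    have evA : ∀ V : Set G, IsOpen V → K ⊆ V → ∀ x ∈ K,
        ∀ᶠ n in Filter.atTop, x * gseq n ∈ V := by
      intro V hVo hKV x hx
      obtain ⟨m, hm⟩ := hUbase V hVo hKV
      filter_upwards [Filter.eventually_ge_atTop m] with n hn
      exact hm (hUanti m n hn (hgO n x hx))
    -- the sequence clusters at some point
    have hclus : ∃ g₀, ClusterPt g₀ (Filter.map gseq Filter.atTop) := by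
      by_contra hno
      push_neg at hno
      have key : ∀ x ∈ K, ∃ s : Set G, IsOpen s ∧ x ∈ s ∧
          ∀ᶠ n in Filter.atTop, gseq n ∉ s := by
        intro x hx
        have h0 : 𝓝 x ⊓ Filter.map gseq Filter.atTop = ⊥ := by
          by_contra h0
          exact hno x ⟨h0⟩
        rw [Filter.inf_eq_bot_iff] at h0
        obtain ⟨U1, hU1, V1, hV1, hUV⟩ := h0
        obtain ⟨s, hsU1, hso, hxs⟩ := mem_nhds_iff.mp hU1
        refine ⟨s, hso, hxs, ?_⟩
        have hev : ∀ᶠ n in Filter.atTop, gseq n ∈ V1 := hV1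
        filter_upwards [hev] with n hn hns
        have : gseq n ∈ U1 ∩ V1 := ⟨hsU1 hns, hn⟩
        rw [hUV] at this
        exact this
      choose! s hso hxs hev using key
      obtain ⟨t, htK, hcov⟩ :=
        hKc.elim_nhds_subcover s (fun x hx => (hso x hx).mem_nhds (hxs x hx))
      have hVo : IsOpen (⋃ x ∈ t, s x) := isOpen_biUnion (fun x hx => hso x (htK x hx))
      have hev2 : ∀ᶠ n in Filter.atTop, (1 : G) * gseq n ∈ ⋃ x ∈ t, s x := evA _ hVo hcov 1 h1K
      have hev3 : ∀ᶠ n in Filter.atTop, ∀ x ∈ t, gseq n ∉ s x := by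
        rw [Filter.eventually_all_finset]
        exact fun x hx => hev x (htK x hx)
      obtain ⟨n, h2, h3⟩ := (hev2.and hev3).exists
      rw [one_mul] at h2
      simp only [Set.mem_iUnion] at h2
      obtain ⟨x, hx, hmem⟩ := h2
      exact h3 x hx hmem
    obtain ⟨g₀, hcl⟩ := hclus
    -- g₀ belongs to Hs
    have hg₀H : g₀ ∈ Hs := by
      intro x hx
      by_contra hxg
      obtain ⟨Vs, Os, hVso, hOso, hKVs, hmemOs, hdisj⟩ := hKc.separation_of_notMem hxg
      have hclx : ClusterPt (x * g₀) (Filter.map (fun n => x * gseq n) Filter.atTop) := by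
        have := hcl.map (f := fun y => x * y)
          ((continuous_const.mul continuous_id).continuousAt) Filter.tendsto_map
        rwa [Filter.map_map] at this
      have hVmem : Vs ∈ Filter.map (fun n => x * gseq n) Filter.atTop := by
        rw [Filter.mem_map]
        exact evA Vs hVso hKVs x hx
      have hmemcl : x * g₀ ∈ closure Vs := mem_closure_of_cluster hclx hVmem
      have hd : Disjoint (closure Vs) Os := hdisj.closure_left hOso
      exact (hd.ne_of_mem hmemcl hmemOs) rfl
    -- but g₀ is not in W, contradiction
    have hWc : Filter.map gseq Filter.atTop ≤ Filter.principal Wᶜ := by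
      rw [Filter.le_principal_iff, Filter.mem_map]
      exact Filter.Eventually.of_forall fun n => hgW n
    have : g₀ ∈ closure Wᶜ :=
      mem_closure_of_cluster hcl (Filter.le_principal_iff.mp hWc)
    rw [(isClosed_compl_iff.mpr hWo).closure_eq] at this
    exact this (hHW hg₀H)
  · -- perfect map
    have hcontmk : Continuous (QuotientGroup.mk : G → G ⧸ H) := continuous_quotient_mk'
    refine ⟨hcontmk, ?_, ?_⟩
    · -- closed map
      intro F hF
      have hqm : IsQuotientMap (QuotientGroup.mk : G → G ⧸ H) := isQuotientMap_quotient_mk'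
      rw [← hqm.isClosed_preimage]
      rw [← isOpen_compl_iff, isOpen_iff_forall_mem_open]
      intro x hx
      have hdisj : ∀ h ∈ Hs, x * h ∈ Fᶜ := by
        intro h hh
        intro hmem
        apply hx
        refine ⟨x * h, hmem, ?_⟩
        exact (QuotientGroup.mk_mul_of_mem x (show h ∈ H from hh)).symm ▸ rfl
      obtain ⟨B, hBo, hxB, hB⟩ := exists_nhds_left hHc (isOpen_compl_iff.mpr hF) hdisj
      refine ⟨B, ?_, hBo, hxB⟩
      intro b hb hbS
      obtain ⟨f, hfF, hfb⟩ := hbS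
      have hfb' : (QuotientGroup.mk f : G ⧸ H) = QuotientGroup.mk b := hfb
      rw [QuotientGroup.eq] at hfb'
      have hfinv : b * (b⁻¹ * f) = f := by rw [mul_inv_cancel_left]
      have hbf : b⁻¹ * f ∈ Hs := by
        have := H.inv_mem hfb'
        have h2 : b⁻¹ * f ∈ H := by simpa [mul_inv_rev] using this
        exact h2
      have := hB b hb _ hbf
      rw [hfinv] at this
      exact this hfF
    · -- compact fibers
      intro y
      obtain ⟨x, rfl⟩ := QuotientGroup.mk_surjective y
      have hfib : (QuotientGroup.mk : G → G ⧸ H) ⁻¹' {QuotientGroup.mk x}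
          = (fun h => x * h) '' Hs := by
        ext g
        simp only [Set.mem_preimage, Set.mem_singleton_iff, Set.mem_image]
        constructor
        · intro hg
          have : x⁻¹ * g ∈ H := by
            rw [QuotientGroup.eq] at hg
            have := H.inv_mem hg
            simpa [mul_inv_rev] using this
          exact ⟨x⁻¹ * g, this, by rw [mul_inv_cancel_left]⟩
        · rintro ⟨h, hh, rfl⟩
          exact QuotientGroup.mk_mul_of_mem x (show h ∈ H from hh)
      rw [hfib]
      exact hHc.image (continuous_const.mul continuous_id)
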